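/- Fix μ ∈ [0,1] and define D_x := (1/√2)·(A⁽¹⁾⊗A⁽⁰⁾ + A⁽⁰⁾⊗A⁽¹⁾ + A⁽⁰⁾⊗A⁽⁻¹⁾ + A⁽⁻¹⁾⊗A⁽⁰⁾) (the transfer-matrix insertion corresponding to the spin-1 operator Ŝˣ). Then for every integer r ≥ 1, lim_{L→∞} Tr[D_x · T(μ)^{r−1} · D_x · T(μ)^{L−r−1}] / Tr[T(μ)^L] = [(λ₊(μ)+1/2)·(λ₊(μ)+μ²/2) / (2·(λ₊(μ)−(μ²+1)/4)·λ₊(μ))] · (λ₀(μ)/λ₊(μ))^r. (This is the transverse spin-spin correlation function ⟨Ŝˣ_j Ŝˣ_{j+r}⟩ = ⟨Ŝʸ_j Ŝʸ_{j+r}⟩ in the infinite-volume S=1 asymmetric VBS state; note λ₊(μ) − (μ²+1)/4 = √(μ⁴+14μ²+1)/4 > 0, so the prefactor is well defined.) -/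

import Mathlib

open Matrix Kronecker Filter

/-- The matrix `A⁽¹⁾` of the S=1 asymmetric VBS state. -/
noncomputable def A1 (μ : ℝ) : Matrix (Fin 2) (Fin 2) ℝ := !![0, 0; -Real.sqrt μ, 0]

/-- The matrix `A⁽⁰⁾` of the S=1 asymmetric VBS state. -/
noncomputable def A0 (μ : ℝ) : Matrix (Fin 2) (Fin 2) ℝ :=
  (1 / Real.sqrt 2) • !![1, 0; 0, -μ]

/-- The matrix `A⁽⁻¹⁾` of the S=1 asymmetric VBS state. -/
noncomputable def Am1 (μ : ℝ) : Matrix (Fin 2) (Fin 2) ℝ := !![0, Real.sqrt μ; 0, 0]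

/-- The transfer matrix `T(μ)` of the S=1 asymmetric VBS state. -/
noncomputable def T (μ : ℝ) : Matrix (Fin 2 × Fin 2) (Fin 2 × Fin 2) ℝ :=
  A1 μ ⊗ₖ A1 μ + A0 μ ⊗ₖ A0 μ + Am1 μ ⊗ₖ Am1 μ

/-- The transfer-matrix insertion `D_x` corresponding to the spin-1 operator `Ŝˣ`. -/
noncomputable def Dx (μ : ℝ) : Matrix (Fin 2 × Fin 2) (Fin 2 × Fin 2) ℝ :=
  (1 / Real.sqrt 2) •
    (A1 μ ⊗ₖ A0 μ + A0 μ ⊗ₖ A1 μ + A0 μ ⊗ₖ Am1 μ + Am1 μ ⊗ₖ A0 μ)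

/-- The eigenvalue `λ₊(μ)`. -/
noncomputable def lamP (μ : ℝ) : ℝ := (μ ^ 2 + 1 + Real.sqrt (μ ^ 4 + 14 * μ ^ 2 + 1)) / 4

/-- The eigenvalue `λ₀(μ)`. -/
noncomputable def lam0 (μ : ℝ) : ℝ := -μ / 2

namespace VBS

noncomputable def S (μ : ℝ) : ℝ := Real.sqrt (μ^4 + 14*μ^2 + 1)
noncomputable def lamM (μ : ℝ) : ℝ := (μ^2 + 1 - S μ)/4
noncomputable def del (μ : ℝ) : ℝ := S μ / 2

lemma lamP_eq (μ : ℝ) : lamP μ = (μ^2 + 1 + S μ)/4 := rfl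

lemma hS2 (μ : ℝ) : S μ ^ 2 = μ^4 + 14*μ^2 + 1 := Real.sq_sqrt (by positivity)

lemma hS1 (μ : ℝ) : 1 ≤ S μ := by
  rw [show (1:ℝ) = Real.sqrt 1 by simp [Real.sqrt_one]]
  exact Real.sqrt_le_sqrt (by nlinarith [sq_nonneg μ, sq_nonneg (μ^2)])

noncomputable def E00 : Matrix (Fin 2) (Fin 2) ℝ := !![1,0;0,0]
noncomputable def E01 : Matrix (Fin 2) (Fin 2) ℝ := !![0,1;0,0]
noncomputable def E10 : Matrix (Fin 2) (Fin 2) ℝ := !![0,0;1,0]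
noncomputable def E11 : Matrix (Fin 2) (Fin 2) ℝ := !![0,0;0,1]

noncomputable def Tm (μ : ℝ) : Matrix (Fin 2 × Fin 2) (Fin 2 × Fin 2) ℝ :=
  (1/2 : ℝ) • (E00 ⊗ₖ E00) + μ • (E01 ⊗ₖ E01 + E10 ⊗ₖ E10) + (μ^2/2) • (E11 ⊗ₖ E11)
    + (-μ/2) • (E00 ⊗ₖ E11 + E11 ⊗ₖ E00)

noncomputable def Dm (μ : ℝ) : Matrix (Fin 2 × Fin 2) (Fin 2 × Fin 2) ℝ :=
  (1/2 : ℝ) • (E00 ⊗ₖ E01 + E01 ⊗ₖ E00) + (-1/2 : ℝ) • (E00 ⊗ₖ E10 + E10 ⊗ₖ E00)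
    + (-μ/2) • (E01 ⊗ₖ E11 + E11 ⊗ₖ E01) + (μ/2) • (E10 ⊗ₖ E11 + E11 ⊗ₖ E10)

noncomputable def Rp (μ : ℝ) : Matrix (Fin 2 × Fin 2) (Fin 2 × Fin 2) ℝ :=
  (1/2 - lamM μ) • (E00 ⊗ₖ E00) + μ • (E01 ⊗ₖ E01 + E10 ⊗ₖ E10)
    + (μ^2/2 - lamM μ) • (E11 ⊗ₖ E11)

noncomputable def Rm (μ : ℝ) : Matrix (Fin 2 × Fin 2) (Fin 2 × Fin 2) ℝ :=
  (lamP μ - 1/2) • (E00 ⊗ₖ E00) + (-μ) • (E01 ⊗ₖ E01 + E10 ⊗ₖ E10)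
    + (lamP μ - μ^2/2) • (E11 ⊗ₖ E11)

noncomputable def Q : Matrix (Fin 2 × Fin 2) (Fin 2 × Fin 2) ℝ :=
  E00 ⊗ₖ E11 + E11 ⊗ₖ E00

noncomputable def XP (μ : ℝ) : Matrix (Fin 2 × Fin 2) (Fin 2 × Fin 2) ℝ :=
  (-(1/2 - lamM μ + μ^2)/2) • (E00 ⊗ₖ E10 + E10 ⊗ₖ E00)
    + (-μ*(1 + μ^2/2 - lamM μ)/2) • (E01 ⊗ₖ E11 + E11 ⊗ₖ E01)

noncomputable def XM (μ : ℝ) : Matrix (Fin 2 × Fin 2) (Fin 2 × Fin 2) ℝ :=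
  (-(lamP μ - 1/2 - μ^2)/2) • (E00 ⊗ₖ E10 + E10 ⊗ₖ E00)
    + (μ*(1 - lamP μ + μ^2/2)/2) • (E01 ⊗ₖ E11 + E11 ⊗ₖ E01)

noncomputable def XQ (μ : ℝ) : Matrix (Fin 2 × Fin 2) (Fin 2 × Fin 2) ℝ :=
  (1/2 : ℝ) • (E00 ⊗ₖ E01 + E01 ⊗ₖ E00) + (μ/2) • (E10 ⊗ₖ E11 + E11 ⊗ₖ E10)

set_option maxHeartbeats 2000000 in
lemma hT (μ : ℝ) (hμ : 0 ≤ μ) : T μ = Tm μ := by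
  have h1 : Real.sqrt μ * Real.sqrt μ = μ := Real.mul_self_sqrt hμ
  have h2 : (Real.sqrt 2)⁻¹ * (Real.sqrt 2)⁻¹ = 2⁻¹ := by
    rw [← mul_inv, Real.mul_self_sqrt (by norm_num)]
  ext ⟨i,j⟩ ⟨k,l⟩
  fin_cases i <;> fin_cases j <;> fin_cases k <;> fin_cases l <;>
    simp [T, Tm, A1, A0, Am1, E00, E01, E10, E11, Matrix.kroneckerMap_apply] <;>
    nlinarith [h1, h2, Real.sqrt_nonneg μ]

set_option maxHeartbeats 2000000 in
lemma hD (μ : ℝ) (hμ : 0 ≤ μ) : Dx μ = Real.sqrt μ • Dm μ := by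
  have h1 : Real.sqrt μ * Real.sqrt μ = μ := Real.mul_self_sqrt hμ
  have h2 : (Real.sqrt 2)⁻¹ * (Real.sqrt 2)⁻¹ = 2⁻¹ := by
    rw [← mul_inv, Real.mul_self_sqrt (by norm_num)]
  ext ⟨i,j⟩ ⟨k,l⟩
  fin_cases i <;> fin_cases j <;> fin_cases k <;> fin_cases l <;>
    simp [Dx, Dm, A1, A0, Am1, E00, E01, E10, E11, Matrix.kroneckerMap_apply] <;>
    first
      | linear_combination (-(Real.sqrt μ * μ)) * h2
      | linear_combination (Real.sqrt μ * μ) * h2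
      | nlinarith [h1, h2, Real.sqrt_nonneg μ]

set_option maxHeartbeats 2000000 in
lemma hRpT (μ : ℝ) : Rp μ * Tm μ = lamP μ • Rp μ := by
  have h := hS2 μ
  ext ⟨i,j⟩ ⟨k,l⟩
  fin_cases i <;> fin_cases j <;> fin_cases k <;> fin_cases l <;>
    simp [Rp, Tm, lamP_eq, lamM, E00, E01, E10, E11, Matrix.mul_apply,
      Fintype.sum_prod_type, Fin.sum_univ_two, Matrix.kroneckerMap_apply]
  all_goals linarith [h]

set_option maxHeartbeats 2000000 in
lemma hRmT (μ : ℝ) : Rm μ * Tm μ = lamM μ • Rm μ := by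
  have h := hS2 μ
  ext ⟨i,j⟩ ⟨k,l⟩
  fin_cases i <;> fin_cases j <;> fin_cases k <;> fin_cases l <;>
    simp [Rm, Tm, lamP_eq, lamM, E00, E01, E10, E11, Matrix.mul_apply,
      Fintype.sum_prod_type, Fin.sum_univ_two, Matrix.kroneckerMap_apply]
  all_goals linarith [h]

set_option maxHeartbeats 2000000 in
lemma hQT (μ : ℝ) : Q * Tm μ = lam0 μ • Q := by
  ext ⟨i,j⟩ ⟨k,l⟩
  fin_cases i <;> fin_cases j <;> fin_cases k <;> fin_cases l <;>
    simp [Q, Tm, lam0, E00, E01, E10, E11, Matrix.mul_apply,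
      Fintype.sum_prod_type, Fin.sum_univ_two, Matrix.kroneckerMap_apply] <;>
    ring

set_option maxHeartbeats 2000000 in
lemma hone (μ : ℝ) : del μ • (1 : Matrix (Fin 2 × Fin 2) (Fin 2 × Fin 2) ℝ)
    = Rp μ + Rm μ + del μ • Q := by
  ext ⟨i,j⟩ ⟨k,l⟩
  fin_cases i <;> fin_cases j <;> fin_cases k <;> fin_cases l <;>
    simp [Rp, Rm, Q, del, lamP_eq, lamM, E00, E01, E10, E11, Matrix.one_apply,
      Matrix.kroneckerMap_apply, Prod.ext_iff] <;>
    ring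

set_option maxHeartbeats 2000000 in
lemma hDmRp (μ : ℝ) : Dm μ * Rp μ = XP μ := by
  ext ⟨i,j⟩ ⟨k,l⟩
  fin_cases i <;> fin_cases j <;> fin_cases k <;> fin_cases l <;>
    simp [Dm, Rp, XP, lamM, E00, E01, E10, E11, Matrix.mul_apply,
      Fintype.sum_prod_type, Fin.sum_univ_two, Matrix.kroneckerMap_apply] <;>
    ring

set_option maxHeartbeats 2000000 in
lemma hDmRm (μ : ℝ) : Dm μ * Rm μ = XM μ := by
  ext ⟨i,j⟩ ⟨k,l⟩
  fin_cases i <;> fin_cases j <;> fin_cases k <;> fin_cases l <;>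
    simp [Dm, Rm, XM, lamP_eq, E00, E01, E10, E11, Matrix.mul_apply,
      Fintype.sum_prod_type, Fin.sum_univ_two, Matrix.kroneckerMap_apply] <;>
    ring

set_option maxHeartbeats 2000000 in
lemma hDmQ (μ : ℝ) : Dm μ * Q = XQ μ := by
  ext ⟨i,j⟩ ⟨k,l⟩
  fin_cases i <;> fin_cases j <;> fin_cases k <;> fin_cases l <;>
    simp [Dm, Q, XQ, E00, E01, E10, E11, Matrix.mul_apply,
      Fintype.sum_prod_type, Fin.sum_univ_two, Matrix.kroneckerMap_apply] <;>
    ring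

noncomputable def Ac (μ : ℝ) : ℝ := (lamP μ + 1/2) * (lamP μ + μ^2/2)
noncomputable def Bc (μ : ℝ) : ℝ := (lamM μ + 1/2) * (lamM μ + μ^2/2)

set_option maxHeartbeats 2000000 in
lemma trPQ (μ : ℝ) : (Dm μ * Rp μ * Dm μ * Q).trace = -(Ac μ)/2 := by
  have h := hS2 μ
  rw [mul_assoc (Dm μ * Rp μ), hDmRp μ, hDmQ μ]
  simp [XP, XQ, Ac, lamP_eq, lamM, E00, E01, E10, E11, Matrix.trace, Matrix.diag,
    Matrix.mul_apply, Fintype.sum_prod_type, Fin.sum_univ_two, Matrix.kroneckerMap_apply]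
  nlinarith [h]

set_option maxHeartbeats 2000000 in
lemma trQP (μ : ℝ) : (Dm μ * Q * Dm μ * Rp μ).trace = -(Ac μ)/2 := by
  have h := hS2 μ
  rw [mul_assoc (Dm μ * Q), hDmRp μ, hDmQ μ]
  simp [XP, XQ, Ac, lamP_eq, lamM, E00, E01, E10, E11, Matrix.trace, Matrix.diag,
    Matrix.mul_apply, Fintype.sum_prod_type, Fin.sum_univ_two, Matrix.kroneckerMap_apply]
  nlinarith [h]

set_option maxHeartbeats 2000000 in
lemma trMQ (μ : ℝ) : (Dm μ * Rm μ * Dm μ * Q).trace = Bc μ/2 := by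
  have h := hS2 μ
  rw [mul_assoc (Dm μ * Rm μ), hDmRm μ, hDmQ μ]
  simp [XM, XQ, Bc, lamP_eq, lamM, E00, E01, E10, E11, Matrix.trace, Matrix.diag,
    Matrix.mul_apply, Fintype.sum_prod_type, Fin.sum_univ_two, Matrix.kroneckerMap_apply]
  nlinarith [h]

set_option maxHeartbeats 2000000 in
lemma trQM (μ : ℝ) : (Dm μ * Q * Dm μ * Rm μ).trace = Bc μ/2 := by
  have h := hS2 μ
  rw [mul_assoc (Dm μ * Q), hDmRm μ, hDmQ μ]
  simp [XM, XQ, Bc, lamP_eq, lamM, E00, E01, E10, E11, Matrix.trace, Matrix.diag,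
    Matrix.mul_apply, Fintype.sum_prod_type, Fin.sum_univ_two, Matrix.kroneckerMap_apply]
  nlinarith [h]

set_option maxHeartbeats 2000000 in
lemma trPP (μ : ℝ) : (Dm μ * Rp μ * Dm μ * Rp μ).trace = 0 := by
  rw [mul_assoc (Dm μ * Rp μ), hDmRp μ]
  simp [XP, E00, E01, E10, E11, Matrix.trace, Matrix.diag,
    Matrix.mul_apply, Fintype.sum_prod_type, Fin.sum_univ_two, Matrix.kroneckerMap_apply]

set_option maxHeartbeats 2000000 in
lemma trPM (μ : ℝ) : (Dm μ * Rp μ * Dm μ * Rm μ).trace = 0 := by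
  rw [mul_assoc (Dm μ * Rp μ), hDmRp μ, hDmRm μ]
  simp [XP, XM, E00, E01, E10, E11, Matrix.trace, Matrix.diag,
    Matrix.mul_apply, Fintype.sum_prod_type, Fin.sum_univ_two, Matrix.kroneckerMap_apply]

set_option maxHeartbeats 2000000 in
lemma trMP (μ : ℝ) : (Dm μ * Rm μ * Dm μ * Rp μ).trace = 0 := by
  rw [mul_assoc (Dm μ * Rm μ), hDmRm μ, hDmRp μ]
  simp [XP, XM, E00, E01, E10, E11, Matrix.trace, Matrix.diag,
    Matrix.mul_apply, Fintype.sum_prod_type, Fin.sum_univ_two, Matrix.kroneckerMap_apply]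

set_option maxHeartbeats 2000000 in
lemma trMM (μ : ℝ) : (Dm μ * Rm μ * Dm μ * Rm μ).trace = 0 := by
  rw [mul_assoc (Dm μ * Rm μ), hDmRm μ]
  simp [XM, E00, E01, E10, E11, Matrix.trace, Matrix.diag,
    Matrix.mul_apply, Fintype.sum_prod_type, Fin.sum_univ_two, Matrix.kroneckerMap_apply]

set_option maxHeartbeats 2000000 in
lemma trQQ (μ : ℝ) : (Dm μ * Q * Dm μ * Q).trace = 0 := by
  rw [mul_assoc (Dm μ * Q), hDmQ μ]
  simp [XQ, E00, E01, E10, E11, Matrix.trace, Matrix.diag,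
    Matrix.mul_apply, Fintype.sum_prod_type, Fin.sum_univ_two, Matrix.kroneckerMap_apply]

set_option maxHeartbeats 2000000 in
lemma trRp (μ : ℝ) : (Rp μ).trace = del μ := by
  simp [Rp, del, lamP_eq, lamM, E00, E01, E10, E11, Matrix.trace, Matrix.diag,
    Fintype.sum_prod_type, Fin.sum_univ_two, Matrix.kroneckerMap_apply]
  ring

set_option maxHeartbeats 2000000 in
lemma trRm (μ : ℝ) : (Rm μ).trace = del μ := by
  simp [Rm, del, lamP_eq, lamM, E00, E01, E10, E11, Matrix.trace, Matrix.diag,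
    Fintype.sum_prod_type, Fin.sum_univ_two, Matrix.kroneckerMap_apply]
  ring

set_option maxHeartbeats 2000000 in
lemma trQ : (Q).trace = 2 := by
  simp [Q, E00, E01, E10, E11, Matrix.trace, Matrix.diag,
    Fintype.sum_prod_type, Fin.sum_univ_two, Matrix.kroneckerMap_apply]
  norm_num


lemma hdel_pos (μ : ℝ) : 0 < del μ := by
  have := hS1 μ; rw [del]; linarith

lemma hP_pos (μ : ℝ) : 0 < lamP μ := by
  have := hS1 μ; have := sq_nonneg μ; rw [lamP_eq]; linarith

lemma hTpow (μ : ℝ) (hμ : 0 ≤ μ) (n : ℕ) :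
    del μ • T μ ^ n = lamP μ ^ n • Rp μ + lamM μ ^ n • Rm μ + (del μ * lam0 μ ^ n) • Q := by
  induction n with
  | zero => simpa using hone μ
  | succ n ih =>
    rw [pow_succ, ← smul_mul_assoc, ih, hT μ hμ, add_mul, add_mul,
      smul_mul_assoc, smul_mul_assoc, smul_mul_assoc, hRpT μ, hRmT μ, hQT μ,
      smul_smul, smul_smul, smul_smul, pow_succ, pow_succ, pow_succ]
    module

lemma trace_T_pow (μ : ℝ) (hμ : 0 ≤ μ) (n : ℕ) :
    (T μ ^ n).trace = lamP μ ^ n + lamM μ ^ n + 2 * lam0 μ ^ n := by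
  have h := congrArg Matrix.trace (hTpow μ hμ n)
  simp only [Matrix.trace_smul, Matrix.trace_add, trRp, trRm, trQ, smul_eq_mul] at h
  have hd := (hdel_pos μ).ne'
  apply mul_left_cancel₀ hd
  rw [h]; ring

lemma key_smul (μ : ℝ) (m k : ℕ) :
    (del μ * del μ) • (Dx μ * T μ ^ m * Dx μ * T μ ^ k)
      = Dx μ * (del μ • T μ ^ m) * Dx μ * (del μ • T μ ^ k) := by
  simp only [mul_smul_comm, smul_mul_assoc, smul_smul]

set_option maxHeartbeats 1000000 in
lemma trace_num' (μ : ℝ) (hμ : 0 ≤ μ) (m k : ℕ) :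
    2 * del μ ^ 2 * (Dx μ * T μ ^ m * Dx μ * T μ ^ k).trace
      = μ * del μ * (-(Ac μ) * (lamP μ ^ m * lam0 μ ^ k + lam0 μ ^ m * lamP μ ^ k)
          + Bc μ * (lamM μ ^ m * lam0 μ ^ k + lam0 μ ^ m * lamM μ ^ k)) := by
  have hsq : Real.sqrt μ ^ 2 = μ := Real.sq_sqrt hμ
  have h := congrArg Matrix.trace (key_smul μ m k)
  rw [hTpow μ hμ m, hTpow μ hμ k, hD μ hμ] at h
  simp only [Matrix.trace_smul, smul_eq_mul, add_mul, mul_add, smul_mul_assoc,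
    mul_smul_comm, smul_smul, Matrix.trace_add, trPQ, trQP, trMQ, trQM,
    trPP, trPM, trMP, trMM, trQQ] at h
  ring_nf at h
  rw [hsq] at h
  rw [hD μ hμ]
  simp only [smul_mul_assoc, mul_smul_comm, smul_smul, Matrix.trace_smul, smul_eq_mul]
  ring_nf
  rw [hsq]
  linear_combination 2 * h

lemma habsM (μ : ℝ) : |lamM μ| < lamP μ := by
  rw [abs_lt]
  simp only [lamM, lamP_eq]
  constructor <;> linarith [hS1 μ, sq_nonneg μ]

lemma habs0 (μ : ℝ) (hμ : 0 ≤ μ) : |lam0 μ| < lamP μ := by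
  have h1 := hS1 μ
  have h2 : |lam0 μ| = μ/2 := by
    rw [lam0, neg_div, abs_neg, abs_of_nonneg (by linarith : (0:ℝ) ≤ μ/2)]
  rw [h2, lamP_eq]
  nlinarith [sq_nonneg (μ - 1)]

lemma trace_num (μ : ℝ) (hμ : 0 ≤ μ) (m k : ℕ) :
    (Dx μ * T μ ^ m * Dx μ * T μ ^ k).trace
      = μ / (2 * del μ) * (-(Ac μ) * (lamP μ ^ m * lam0 μ ^ k + lam0 μ ^ m * lamP μ ^ k)
          + Bc μ * (lamM μ ^ m * lam0 μ ^ k + lam0 μ ^ m * lamM μ ^ k)) := by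
  have hd := (hdel_pos μ).ne'
  have h := trace_num' μ hμ m k
  have h2 : (2 * del μ ^ 2) * (Dx μ * T μ ^ m * Dx μ * T μ ^ k).trace
      = (2 * del μ ^ 2) * (μ / (2 * del μ) *
          (-(Ac μ) * (lamP μ ^ m * lam0 μ ^ k + lam0 μ ^ m * lamP μ ^ k)
            + Bc μ * (lamM μ ^ m * lam0 μ ^ k + lam0 μ ^ m * lamM μ ^ k))) := by
    rw [h]; field_simp
  exact mul_left_cancel₀ (by positivity) h2

end VBS

/-- The transverse spin-spin correlation function of the infinite-volume S=1
asymmetric VBS state: for every `r ≥ 1`, `⟨Ŝˣ_j Ŝˣ_{j+r}⟩` equals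
`[(λ₊+1/2)(λ₊+μ²/2) / (2(λ₊−(μ²+1)/4)λ₊)]·(λ₀/λ₊)^r`. -/

theorem xx_correlation_S1 (μ : ℝ) (hμ : μ ∈ Set.Icc (0 : ℝ) 1) (r : ℕ) (hr : 1 ≤ r) :
    Tendsto (fun L : ℕ =>
        (Dx μ * T μ ^ (r - 1) * Dx μ * T μ ^ (L - r - 1)).trace / (T μ ^ L).trace)
      atTop (nhds
        (((lamP μ + 1 / 2) * (lamP μ + μ ^ 2 / 2) /
            (2 * (lamP μ - (μ ^ 2 + 1) / 4) * lamP μ)) * (lam0 μ / lamP μ) ^ r)) := by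
  obtain ⟨hμ0, _hμ1⟩ := hμ
  obtain ⟨d, rfl⟩ : ∃ d, r = d + 1 := ⟨r - 1, by omega⟩
  have hP := VBS.hP_pos μ
  have hDel := VBS.hdel_pos μ
  have hPne : lamP μ ≠ 0 := hP.ne'
  have hDne : VBS.del μ ≠ 0 := hDel.ne'
  set P := lamP μ with hPdef
  set M := VBS.lamM μ with hMdef
  set Z := lam0 μ with hZdef
  set D := VBS.del μ with hDdef
  set A := VBS.Ac μ with hAdef
  set B := VBS.Bc μ with hBdef
  have hq1 : Tendsto (fun n : ℕ => (M / P) ^ n) atTop (nhds 0) := by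
    apply tendsto_pow_atTop_nhds_zero_of_abs_lt_one
    rw [abs_div, abs_of_pos hP]
    exact (div_lt_one hP).2 (VBS.habsM μ)
  have hq0 : Tendsto (fun n : ℕ => (Z / P) ^ n) atTop (nhds 0) := by
    apply tendsto_pow_atTop_nhds_zero_of_abs_lt_one
    rw [abs_div, abs_of_pos hP]
    exact (div_lt_one hP).2 (VBS.habs0 μ hμ0)
  have hFnum : Tendsto (fun n : ℕ => μ / (2 * D) *
      (-A * (P ^ d * (Z / P) ^ n + Z ^ d) + B * (M ^ d * (Z / P) ^ n + Z ^ d * (M / P) ^ n)))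
      atTop (nhds (μ / (2 * D) * (-A * (P ^ d * 0 + Z ^ d) + B * (M ^ d * 0 + Z ^ d * 0)))) := by
    apply Tendsto.const_mul
    exact (((hq0.const_mul _).add_const _).const_mul _).add
      (((hq0.const_mul _).add (hq1.const_mul _)).const_mul _)
  have hFden : Tendsto (fun n : ℕ =>
      P ^ (d + 2) + M ^ (d + 2) * (M / P) ^ n + 2 * Z ^ (d + 2) * (Z / P) ^ n)
      atTop (nhds (P ^ (d + 2) + M ^ (d + 2) * 0 + 2 * Z ^ (d + 2) * 0)) := by
    exact (tendsto_const_nhds.add (hq1.const_mul _)).add (hq0.const_mul _)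
  have hden_ne : P ^ (d + 2) + M ^ (d + 2) * 0 + 2 * Z ^ (d + 2) * 0 ≠ 0 := by
    simpa using pow_ne_zero (d + 2) hPne
  have hFlim := hFnum.div hFden hden_ne
  have hPD : P - (μ ^ 2 + 1) / 4 = D / 2 := by
    rw [hPdef, hDdef, VBS.lamP_eq, VBS.del]; ring
  have hval : (μ / (2 * D) * (-A * (P ^ d * 0 + Z ^ d) + B * (M ^ d * 0 + Z ^ d * 0))) /
        (P ^ (d + 2) + M ^ (d + 2) * 0 + 2 * Z ^ (d + 2) * 0)
      = ((P + 1 / 2) * (P + μ ^ 2 / 2) / (2 * (P - (μ ^ 2 + 1) / 4) * P)) *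
        (Z / P) ^ (d + 1) := by
    rw [hPD, hAdef, VBS.Ac, ← hPdef]
    rw [div_pow, pow_succ, pow_succ]
    field_simp
    rw [hZdef, lam0]
    ring
  rw [← tendsto_add_atTop_iff_nat (d + 2)]
  rw [hval] at hFlim
  refine Tendsto.congr (fun n => ?_) hFlim
  have e1 : n + (d + 2) - (d + 1) - 1 = n := by omega
  have e2 : d + 1 - 1 = d := by omega
  simp only [e1, e2]
  rw [VBS.trace_num μ hμ0 d n, VBS.trace_T_pow μ hμ0 (n + (d + 2))]
  rw [← hPdef, ← hMdef, ← hZdef, ← hDdef, ← hAdef, ← hBdef]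
  have hnum' : μ / (2 * D) * (-A * (P ^ d * Z ^ n + Z ^ d * P ^ n)
        + B * (M ^ d * Z ^ n + Z ^ d * M ^ n))
      = (μ / (2 * D) * (-A * (P ^ d * (Z / P) ^ n + Z ^ d)
          + B * (M ^ d * (Z / P) ^ n + Z ^ d * (M / P) ^ n))) * P ^ n := by
    simp only [div_pow]
    field_simp
  have hden' : P ^ (n + (d + 2)) + M ^ (n + (d + 2)) + 2 * Z ^ (n + (d + 2))
      = (P ^ (d + 2) + M ^ (d + 2) * (M / P) ^ n + 2 * Z ^ (d + 2) * (Z / P) ^ n) * P ^ n := by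
    simp only [div_pow]
    field_simp
    ring
  rw [hnum', hden', mul_div_mul_right _ _ (pow_ne_zero n hPne)]
  rfl
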